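/- arXiv:1706.03078 — 4 statements merged into one kernel-verified Lean document; each statement's English description precedes it below -/
import Mathlib

section
/- General bound with operator norms (Proposition 4). Let H₀, H₁, …, H_n and P₁, …, P_n be separable real Hilbert spaces, and let τ : ℝ^d → ℝ^d be C¹ with ‖∇τ‖_∞ ≤ 1/2, so that the action operator L_τ is bounded on each Bochner space L²(ℝ^d, ·). For k = 1, …, n let P_k : L²(ℝ^d, H_{k-1}) → L²(ℝ^d, P_k) be a linear norm-preserving operator (‖P_k x‖ = ‖x‖ for all x); let M_k : L²(ℝ^d, P_k) → L²(ℝ^d, H_k) satisfy ‖M_k y − M_k y'‖ ≤ ‖y − y'‖ and ‖M_k y‖ ≤ ‖y‖ for all y, y', and M_k L_τ = L_τ M_k; and let A_k : L²(ℝ^d, H_k) → L²(ℝ^d, H_k) (for k = 0, …, n, with A_0 on L²(ℝ^d, H₀)) be bounded linear operators with ‖A_k‖ ≤ 1. Define Φ_n(x) = A_n M_n P_n A_{n-1} M_{n-1} P_{n-1} ⋯ A_1 M_1 P_1 A_0 x. Then for every x ∈ L²(ℝ^d, H₀): ‖Φ_n(L_τ x) − Φ_n(x)‖ ≤ ( Σ_{k=1}^{n}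 ‖[P_k A_{k-1}, L_τ]‖ + ‖[A_n, L_τ]‖ + ‖L_τ A_n − A_n‖ ) ‖x‖, where [A, B] = AB − BA and ‖·‖ denotes the L² → L² operator norm. -/
open MeasureTheory
open scoped ENNReal

set_option maxHeartbeats 1600000

/-- General bound with operator norms (Proposition 4): for the multilayer representation
`Φ_n(x) = A_n M_n P_n ⋯ A_1 M_1 P_1 A_0 x`, where the `P_k` are linear norm-preserving,
the `M_k` are non-expansive, norm-non-increasing and commute with `L_τ`, and the `A_k`
are linear with `‖A_k‖ ≤ 1`,
`‖Φ_n(L_τ x) − Φ_n(x)‖ ≤ (∑_{k=1}^n ‖[P_k A_{k-1}, L_τ]‖ + ‖[A_n, L_τ]‖ + ‖L_τ A_n − A_n‖) ‖x‖`.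
Here layer `k+1` (for `k = 0, …, n−1`) maps `L²(ℝ^d, H k)` into `L²(ℝ^d, H (k+1))` through
the patch space `L²(ℝ^d, PP k)`. -/
theorem stmt_2 {d : ℕ} (n : ℕ)
    (H : ℕ → Type*) [∀ k, NormedAddCommGroup (H k)] [∀ k, InnerProductSpace ℝ (H k)]
    [∀ k, CompleteSpace (H k)] [∀ k, SecondCountableTopology (H k)]
    (PP : ℕ → Type*) [∀ k, NormedAddCommGroup (PP k)] [∀ k, InnerProductSpace ℝ (PP k)]
    [∀ k, CompleteSpace (PP k)] [∀ k, SecondCountableTopology (PP k)]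
    (τ : EuclideanSpace ℝ (Fin d) → EuclideanSpace ℝ (Fin d))
    (hτ : ContDiff ℝ 1 τ) (hgrad : ∀ u, ‖fderiv ℝ τ u‖ ≤ 1 / 2)
    (LτH : ∀ k, Lp (H k) 2 (volume : Measure (EuclideanSpace ℝ (Fin d))) →L[ℝ]
                Lp (H k) 2 (volume : Measure (EuclideanSpace ℝ (Fin d))))
    (hLτH : ∀ k (x : Lp (H k) 2 (volume : Measure (EuclideanSpace ℝ (Fin d)))),
      (LτH k x : EuclideanSpace ℝ (Fin d) → H k) =ᵐ[volume] fun u => x (u - τ u))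
    (LτP : ∀ k, Lp (PP k) 2 (volume : Measure (EuclideanSpace ℝ (Fin d))) →L[ℝ]
                Lp (PP k) 2 (volume : Measure (EuclideanSpace ℝ (Fin d))))
    (hLτP : ∀ k (y : Lp (PP k) 2 (volume : Measure (EuclideanSpace ℝ (Fin d)))),
      (LτP k y : EuclideanSpace ℝ (Fin d) → PP k) =ᵐ[volume] fun u => y (u - τ u))
    (P : ∀ k, Lp (H k) 2 (volume : Measure (EuclideanSpace ℝ (Fin d))) →L[ℝ]
              Lp (PP k) 2 (volume : Measure (EuclideanSpace ℝ (Fin d))))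
    (hPnorm : ∀ k x, ‖P k x‖ = ‖x‖)
    (M : ∀ k, Lp (PP k) 2 (volume : Measure (EuclideanSpace ℝ (Fin d))) →
              Lp (H (k + 1)) 2 (volume : Measure (EuclideanSpace ℝ (Fin d))))
    (hMlip : ∀ k y y', ‖M k y - M k y'‖ ≤ ‖y - y'‖)
    (hMnorm : ∀ k y, ‖M k y‖ ≤ ‖y‖)
    (hMcomm : ∀ k y, M k (LτP k y) = LτH (k + 1) (M k y))
    (A : ∀ k, Lp (H k) 2 (volume : Measure (EuclideanSpace ℝ (Fin d))) →L[ℝ]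
              Lp (H k) 2 (volume : Measure (EuclideanSpace ℝ (Fin d))))
    (hA : ∀ k, ‖A k‖ ≤ 1)
    (x : Lp (H 0) 2 (volume : Measure (EuclideanSpace ℝ (Fin d))))
    (y z : ∀ k, Lp (H k) 2 (volume : Measure (EuclideanSpace ℝ (Fin d))))
    (hy0 : y 0 = A 0 (LτH 0 x)) (hz0 : z 0 = A 0 x)
    (hy : ∀ k < n, y (k + 1) = A (k + 1) (M k (P k (y k))))
    (hz : ∀ k < n, z (k + 1) = A (k + 1) (M k (P k (z k)))) :
    ‖y n - z n‖ ≤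
      ((∑ k ∈ Finset.range n,
          ‖((P k).comp (A k)).comp (LτH k) - (LτP k).comp ((P k).comp (A k))‖) +
        ‖(A n).comp (LτH n) - (LτH n).comp (A n)‖ +
        ‖(LτH n).comp (A n) - A n‖) * ‖x‖ := by

  have hAle : ∀ k (w : Lp (H k) 2 (volume : Measure (EuclideanSpace ℝ (Fin d)))),
      ‖A k w‖ ≤ ‖w‖ := by
    intro k w
    calc ‖A k w‖ ≤ ‖A k‖ * ‖w‖ := (A k).le_opNorm w
      _ ≤ 1 * ‖w‖ := mul_le_mul_of_nonneg_right (hA k) (norm_nonneg w)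
      _ = ‖w‖ := one_mul _
  set C : ℕ → ℝ := fun k =>
    ‖((P k).comp (A k)).comp (LτH k) - (LτP k).comp ((P k).comp (A k))‖ with hC
  have key : ∀ k, k ≤ n → ∃ u v, y k = A k u ∧ z k = A k v ∧ ‖v‖ ≤ ‖x‖ ∧
      ‖u - LτH k v‖ ≤ (∑ j ∈ Finset.range k, C j) * ‖x‖ := by
    intro k
    induction k with
    | zero =>
      intro _
      exact ⟨LτH 0 x, x, hy0, hz0, le_refl _, by simp⟩
    | succ k ih =>
      intro hk
      obtain ⟨u, v, hyu, hzv, hv, huv⟩ := ih (Nat.le_of_succ_le hk)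
      have hkn : k < n := hk
      refine ⟨M k (P k (A k u)), M k (P k (A k v)), ?_, ?_, ?_, ?_⟩
      · rw [hy k hkn, hyu]
      · rw [hz k hkn, hzv]
      · calc ‖M k (P k (A k v))‖ ≤ ‖P k (A k v)‖ := hMnorm k _
          _ = ‖A k v‖ := hPnorm k _
          _ ≤ ‖v‖ := hAle k _
          _ ≤ ‖x‖ := hv
      · have hcomm : LτH (k + 1) (M k (P k (A k v))) = M k (LτP k (P k (A k v))) :=
          (hMcomm k _).symm
        rw [hcomm]
        have h1 : ‖M k (P k (A k u)) - M k (LτP k (P k (A k v)))‖ ≤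
            ‖P k (A k u) - LτP k (P k (A k v))‖ := hMlip k _ _
        have h2 : ‖P k (A k u) - P k (A k (LτH k v))‖ ≤
            (∑ j ∈ Finset.range k, C j) * ‖x‖ := by
          calc ‖P k (A k u) - P k (A k (LτH k v))‖
              = ‖P k (A k u - A k (LτH k v))‖ := by rw [map_sub]
            _ = ‖A k u - A k (LτH k v)‖ := hPnorm k _
            _ = ‖A k (u - LτH k v)‖ := by rw [map_sub]
            _ ≤ ‖u - LτH k v‖ := hAle k _
            _ ≤ _ := huv
        have h3 : ‖P k (A k (LτH k v)) - LτP k (P k (A k v))‖ ≤ C k * ‖x‖ := by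
          have := (((P k).comp (A k)).comp (LτH k) -
            (LτP k).comp ((P k).comp (A k))).le_opNorm v
          simp only [ContinuousLinearMap.sub_apply, ContinuousLinearMap.comp_apply] at this
          calc ‖P k (A k (LτH k v)) - LτP k (P k (A k v))‖ ≤ C k * ‖v‖ := this
            _ ≤ C k * ‖x‖ := mul_le_mul_of_nonneg_left hv (by rw [hC]; positivity)
        calc ‖M k (P k (A k u)) - M k (LτP k (P k (A k v)))‖
            ≤ ‖P k (A k u) - LτP k (P k (A k v))‖ := h1
          _ ≤ ‖P k (A k u) - P k (A k (LτH k v))‖ +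
              ‖P k (A k (LτH k v)) - LτP k (P k (A k v))‖ := norm_sub_le_norm_sub_add_norm_sub _ _ _
          _ ≤ (∑ j ∈ Finset.range k, C j) * ‖x‖ + C k * ‖x‖ := add_le_add h2 h3
          _ = (∑ j ∈ Finset.range (k + 1), C j) * ‖x‖ := by
              rw [Finset.sum_range_succ, add_mul]
  obtain ⟨u, v, hyu, hzv, hv, huv⟩ := key n le_rfl
  have hAn : ‖A n u - A n (LτH n v)‖ ≤ (∑ j ∈ Finset.range n, C j) * ‖x‖ := by
    calc ‖A n u - A n (LτH n v)‖ = ‖A n (u - LτH n v)‖ := by rw [map_sub]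
      _ ≤ ‖u - LτH n v‖ := hAle n _
      _ ≤ _ := huv
  have hcomm : ‖A n (LτH n v) - LτH n (A n v)‖ ≤
      ‖(A n).comp (LτH n) - (LτH n).comp (A n)‖ * ‖x‖ := by
    have := ((A n).comp (LτH n) - (LτH n).comp (A n)).le_opNorm v
    simp only [ContinuousLinearMap.sub_apply, ContinuousLinearMap.comp_apply] at this
    exact this.trans (mul_le_mul_of_nonneg_left hv (norm_nonneg _))
  have hlast : ‖LτH n (A n v) - A n v‖ ≤ ‖(LτH n).comp (A n) - A n‖ * ‖x‖ := by
    have := ((LτH n).comp (A n) - A n).le_opNorm v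
    simp only [ContinuousLinearMap.sub_apply, ContinuousLinearMap.comp_apply] at this
    exact this.trans (mul_le_mul_of_nonneg_left hv (norm_nonneg _))
  calc ‖y n - z n‖ = ‖A n u - A n v‖ := by rw [hyu, hzv]
    _ ≤ ‖A n u - LτH n (A n v)‖ + ‖LτH n (A n v) - A n v‖ :=
        norm_sub_le_norm_sub_add_norm_sub _ _ _
    _ ≤ (‖A n u - A n (LτH n v)‖ + ‖A n (LτH n v) - LτH n (A n v)‖) +
        ‖LτH n (A n v) - A n v‖ :=
        add_le_add_left (norm_sub_le_norm_sub_add_norm_sub _ _ _) _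
    _ ≤ ((∑ j ∈ Finset.range n, C j) * ‖x‖ +
          ‖(A n).comp (LτH n) - (LτH n).comp (A n)‖ * ‖x‖) +
        ‖(LτH n).comp (A n) - A n‖ * ‖x‖ :=
        add_le_add (add_le_add hAn hcomm) hlast
    _ = ((∑ k ∈ Finset.range n, C k) +
        ‖(A n).comp (LτH n) - (LτH n).comp (A n)‖ +
        ‖(LτH n).comp (A n) - A n‖) * ‖x‖ := by ring
end

section
/- Non-expansiveness of homogeneous dot-product kernel mappings (Lemma 1). Let P be a real inner product space and let κ(t) = Σ_{j≥0} b_j t^j with b_j ≥ 0 for all j, Σ_j b_j < ∞ and Σ_j j b_j < ∞, normalized so that κ(1) = 1 and κ'(1) = 1. Define the homogeneous dot-product kernel K(z, z') = ‖z‖ ‖z'‖ κ(⟨z, z'⟩ / (‖z‖ ‖z'‖)) for z, z' ≠ 0 and K(z, z') = 0 if z = 0 or z' = 0. Then for all z, z' ∈ P: K(z, z) + K(z', z') − 2 K(z, z') ≤ ‖z − z'‖²; equivalently, any kernel feature map φ of K satisfies ‖φ(z) − φ(z')‖ ≤ ‖z − z'‖. -/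
open scoped RealInnerProductSpace Classical

/-- The homogeneous dot-product kernel `K(z,z') = ‖z‖‖z'‖ κ(⟨z,z'⟩/(‖z‖‖z'‖))`
for `z, z' ≠ 0`, and `0` if `z = 0` or `z' = 0`, where `κ(t) = ∑ b_j t^j`. -/
noncomputable def hdpKernel {P : Type*} [NormedAddCommGroup P] [InnerProductSpace ℝ P]
    (b : ℕ → ℝ) (z z' : P) : ℝ :=
  if z = 0 ∨ z' = 0 then 0
  else ‖z‖ * ‖z'‖ * ∑' j : ℕ, b j * (⟪z, z'⟫ / (‖z‖ * ‖z'‖)) ^ j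

private lemma aux_pow_le (t : ℝ) (ht : |t| ≤ 1) : ∀ j : ℕ, 1 - t ^ j ≤ j * (1 - t) := by
  intro j
  induction j with
  | zero => simp
  | succ n ih =>
    have hle : t ^ n ≤ 1 := by
      calc t ^ n ≤ |t ^ n| := le_abs_self _
        _ = |t| ^ n := abs_pow t n
        _ ≤ 1 := pow_le_one₀ (abs_nonneg t) ht
    have h1 : -1 ≤ t := neg_le_of_abs_le ht
    have h2 : t ≤ 1 := le_of_abs_le ht
    have : 1 - t ^ (n + 1) = (1 - t) + t * (1 - t ^ n) := by ring
    rcases le_or_gt 0 t with hpos | hneg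
    · have : t * (1 - t ^ n) ≤ 1 - t ^ n := by nlinarith
      push_cast
      nlinarith
    · have : t * (1 - t ^ n) ≤ 0 := mul_nonpos_of_nonpos_of_nonneg hneg.le (by linarith)
      have hn : (0 : ℝ) ≤ (n : ℝ) * (1 - t) :=
        mul_nonneg (Nat.cast_nonneg n) (by linarith)
      push_cast
      nlinarith

/-- Non-expansiveness of homogeneous dot-product kernel mappings (Lemma 1):
if `κ(1) = 1` and `κ'(1) = 1`, then `K(z,z) + K(z',z') − 2K(z,z') ≤ ‖z − z'‖²`. -/
theorem stmt_5 {P : Type*} [NormedAddCommGroup P] [InnerProductSpace ℝ P]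
    (b : ℕ → ℝ) (hb : ∀ j, 0 ≤ b j)
    (hsum : Summable b) (hsum' : Summable fun j : ℕ => (j : ℝ) * b j)
    (hone : (∑' j, b j) = 1) (hderiv : (∑' j : ℕ, (j : ℝ) * b j) = 1) :
    ∀ z z' : P,
      hdpKernel b z z + hdpKernel b z' z' - 2 * hdpKernel b z z' ≤ ‖z - z'‖ ^ 2 := by
  -- self kernel value
  have hself : ∀ z : P, hdpKernel b z z = ‖z‖ ^ 2 := by
    intro z
    by_cases hz : z = 0
    · simp [hdpKernel, hz]
    · have hn : ‖z‖ ≠ 0 := norm_ne_zero_iff.mpr hz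
      have hinner : ⟪z, z⟫ / (‖z‖ * ‖z‖) = 1 := by
        rw [real_inner_self_eq_norm_mul_norm]
        field_simp
      rw [hdpKernel, if_neg (by simp [hz]), hinner]
      simp [hone]
      ring
  intro z z'
  by_cases hz : z = 0
  · subst hz
    have h2 : hdpKernel b (0:P) z' = 0 := by simp [hdpKernel]
    simp only [hself, h2]
    simp
  by_cases hz' : z' = 0
  · subst hz'
    have h2 : hdpKernel b z (0:P) = 0 := by simp [hdpKernel]
    simp only [hself, h2]
    simp
  -- main case
  have hnz : (0:ℝ) < ‖z‖ := norm_pos_iff.mpr hz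
  have hnz' : (0:ℝ) < ‖z'‖ := norm_pos_iff.mpr hz'
  set t : ℝ := ⟪z, z'⟫ / (‖z‖ * ‖z'‖) with ht
  have habs : |t| ≤ 1 := by
    have := abs_real_inner_div_norm_mul_norm_le_one z z'
    simpa [ht] using this
  have hKzz' : hdpKernel b z z' = ‖z‖ * ‖z'‖ * ∑' j : ℕ, b j * t ^ j := by
    simp [hdpKernel, hz, hz', ht]
  -- summability of b j * t^j
  have hsummt : Summable fun j : ℕ => b j * t ^ j := by
    apply Summable.of_norm_bounded hsum
    intro j
    have hp : |t ^ j| ≤ 1 := by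
      rw [abs_pow]; exact pow_le_one₀ (abs_nonneg t) habs
    rw [Real.norm_eq_abs, abs_mul, abs_of_nonneg (hb j)]
    calc b j * |t ^ j| ≤ b j * 1 := by
          exact mul_le_mul_of_nonneg_left hp (hb j)
      _ = b j := mul_one _
  -- key: κ(t) ≥ t
  have hkey : t ≤ ∑' j : ℕ, b j * t ^ j := by
    have hsl : Summable fun j : ℕ => b j + (t - 1) * ((j : ℝ) * b j) :=
      hsum.add (hsum'.mul_left _)
    have hval : (∑' j : ℕ, (b j + (t - 1) * ((j : ℝ) * b j))) = t := by
      rw [Summable.tsum_add hsum (hsum'.mul_left _), tsum_mul_left, hone, hderiv]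
      ring
    calc t = ∑' j : ℕ, (b j + (t - 1) * ((j : ℝ) * b j)) := hval.symm
      _ ≤ ∑' j : ℕ, b j * t ^ j := by
          apply Summable.tsum_le_tsum _ hsl hsummt
          intro j
          have h := aux_pow_le t habs j
          have := hb j
          nlinarith
  rw [hself, hself, hKzz']
  have hnorm : ‖z - z'‖ ^ 2 = ‖z‖ ^ 2 + ‖z'‖ ^ 2 - 2 * (‖z‖ * ‖z'‖ * t) := by
    rw [norm_sub_sq_real, ht]
    field_simp
    ring
  rw [hnorm]
  have : ‖z‖ * ‖z'‖ * t ≤ ‖z‖ * ‖z'‖ * ∑' j : ℕ, b j * t ^ j :=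
    mul_le_mul_of_nonneg_left hkey (by positivity)
  linarith
end

section
/- Boundedness of the diffeomorphism action operator on L². Let τ : ℝ^d → ℝ^d be a C¹ map with ‖∇τ‖_∞ ≤ 1/2 and let H be a separable real Hilbert space. Then for every f ∈ L²(ℝ^d, H), the function L_τ f(u) = f(u − τ(u)) belongs to L²(ℝ^d, H) and ‖L_τ f‖² ≤ (1 − ‖∇τ‖_∞)^{-d} ‖f‖²; in particular the operator L_τ is bounded with operator norm ‖L_τ‖ ≤ (1 − ‖∇τ‖_∞)^{-d/2} ≤ 2^{d/2}. -/
open MeasureTheory Set Metric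
open scoped ENNReal

/-- Hadamard-type bound: `|det B| ≤ ‖B‖ ^ d` on Euclidean space, via Haar measure. -/
lemma aux_abs_det_le_pow {d : ℕ} (B : EuclideanSpace ℝ (Fin d) →L[ℝ] EuclideanSpace ℝ (Fin d)) :
    |B.det| ≤ ‖B‖ ^ d := by
  rcases Nat.eq_zero_or_pos d with hd | hd
  · subst hd
    have : Subsingleton (EuclideanSpace ℝ (Fin 0)) := inferInstance
    rw [ContinuousLinearMap.det, LinearMap.det_eq_one_of_subsingleton, pow_zero, abs_one]
  · have : Nontrivial (EuclideanSpace ℝ (Fin d)) := by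
      have : 0 < Module.finrank ℝ (EuclideanSpace ℝ (Fin d)) := by
        simpa using hd
      exact Module.nontrivial_of_finrank_pos this
    set μ : Measure (EuclideanSpace ℝ (Fin d)) := volume
    have h1 : μ (B '' ball 0 1) = ENNReal.ofReal |B.det| * μ (ball 0 1) :=
      μ.addHaar_image_continuousLinearMap B (ball 0 1)
    have hsub : B '' ball 0 1 ⊆ closedBall 0 ‖B‖ := by
      rintro _ ⟨x, hx, rfl⟩
      simp only [mem_closedBall, dist_zero_right]
      calc ‖B x‖ ≤ ‖B‖ * ‖x‖ := B.le_opNorm x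
        _ ≤ ‖B‖ * 1 := by
            have hx1 : ‖x‖ ≤ 1 := by
              simpa [dist_zero_right] using (mem_ball.1 hx).le
            exact mul_le_mul_of_nonneg_left hx1 (norm_nonneg B)
        _ = ‖B‖ := mul_one _
    have h2 : μ (closedBall (0 : EuclideanSpace ℝ (Fin d)) ‖B‖)
        = ENNReal.ofReal (‖B‖ ^ Module.finrank ℝ (EuclideanSpace ℝ (Fin d))) * μ (ball 0 1) :=
      μ.addHaar_closedBall 0 (norm_nonneg B)
    have hle : ENNReal.ofReal |B.det| * μ (ball 0 1)
        ≤ ENNReal.ofReal (‖B‖ ^ Module.finrank ℝ (EuclideanSpace ℝ (Fin d))) * μ (ball 0 1) := by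
      rw [← h1, ← h2]; exact measure_mono hsub
    have hpos : μ (ball (0 : EuclideanSpace ℝ (Fin d)) 1) ≠ 0 :=
      (measure_ball_pos μ 0 one_pos).ne'
    have htop : μ (ball (0 : EuclideanSpace ℝ (Fin d)) 1) ≠ ∞ :=
      measure_ball_lt_top.ne
    have := (ENNReal.mul_le_mul_iff_left hpos htop).1 hle
    have hfr : Module.finrank ℝ (EuclideanSpace ℝ (Fin d)) = d := by simp
    rw [hfr] at this
    exact (ENNReal.ofReal_le_ofReal_iff (pow_nonneg (norm_nonneg _) _)).1 this

/-- Lower bound on the determinant of `1 - A` for `‖A‖ ≤ s < 1`. -/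
lemma aux_det_one_sub_ge {d : ℕ} (A : EuclideanSpace ℝ (Fin d) →L[ℝ] EuclideanSpace ℝ (Fin d))
    {s : ℝ} (hAs : ‖A‖ ≤ s) (hs : s < 1) :
    (1 - s) ^ d ≤ |(1 - A).det| := by
  rcases Nat.eq_zero_or_pos d with hd | hd
  · subst hd
    have : Subsingleton (EuclideanSpace ℝ (Fin 0)) := inferInstance
    rw [ContinuousLinearMap.det, LinearMap.det_eq_one_of_subsingleton, pow_zero, abs_one]
  · have : Nontrivial (EuclideanSpace ℝ (Fin d)) := by
      have : 0 < Module.finrank ℝ (EuclideanSpace ℝ (Fin d)) := by simpa using hd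
      exact Module.nontrivial_of_finrank_pos this
    have hA1 : ‖A‖ < 1 := lt_of_le_of_lt hAs hs
    set C : EuclideanSpace ℝ (Fin d) →L[ℝ] EuclideanSpace ℝ (Fin d) := ∑' n : ℕ, A ^ n with hC
    have hBC : (1 - A) * C = 1 := mul_neg_geom_series A hA1
    have hs1 : (0 : ℝ) < 1 - s := by linarith
    have hCnorm : ‖C‖ ≤ (1 - s)⁻¹ := by
      have h := tsum_geometric_le_of_norm_lt_one A hA1
      have h1 : ‖(1 : EuclideanSpace ℝ (Fin d) →L[ℝ] EuclideanSpace ℝ (Fin d))‖ = 1 :=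
        ContinuousLinearMap.norm_id
      rw [h1] at h
      have h2 : (1 - ‖A‖)⁻¹ ≤ (1 - s)⁻¹ := by
        apply inv_anti₀ hs1
        linarith
      rw [hC]
      linarith
    have hone : (1 : EuclideanSpace ℝ (Fin d) →L[ℝ] EuclideanSpace ℝ (Fin d)).det = 1 := by
      rw [ContinuousLinearMap.det, ContinuousLinearMap.one_def, ContinuousLinearMap.coe_id,
        LinearMap.det_id]
    have hcomp : ((1 - A).comp C).det = (1 - A).det * C.det := by
      rw [ContinuousLinearMap.det, ContinuousLinearMap.toLinearMap_comp, LinearMap.det_comp]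
    have hmul : (1 - A).det * C.det = 1 := by
      have h' := congrArg ContinuousLinearMap.det hBC
      rwa [ContinuousLinearMap.mul_def, hcomp, hone] at h'
    have hb0 : C.det ≠ 0 := by
      intro h0; rw [h0, mul_zero] at hmul; exact zero_ne_one hmul
    have hbb : |C.det| ≤ ((1 - s)⁻¹) ^ d := by
      calc |C.det| ≤ ‖C‖ ^ d := aux_abs_det_le_pow _
        _ ≤ ((1 - s)⁻¹) ^ d := pow_le_pow_left₀ (norm_nonneg _) hCnorm d
    have habs : |(1 - A).det| * |C.det| = 1 := by rw [← abs_mul, hmul, abs_one]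
    have hbpos : 0 < |C.det| := abs_pos.2 hb0
    have ha : |(1 - A).det| = |C.det|⁻¹ :=
      eq_inv_of_mul_eq_one_left habs
    have hkey : (((1 - s)⁻¹) ^ d)⁻¹ ≤ |C.det|⁻¹ := inv_anti₀ hbpos hbb
    have h3 : (((1 - s)⁻¹) ^ d)⁻¹ = (1 - s) ^ d := by rw [← inv_pow, inv_inv]
    rw [ha, ← h3]
    exact hkey

/-- Boundedness of the diffeomorphism action operator on `L²`: if `τ` is `C¹` with
`‖∇τ‖_∞ ≤ 1/2`, then `L_τ f (u) = f(u − τ(u))` is in `L²` and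
`‖L_τ f‖ ≤ (1 − ‖∇τ‖_∞)^{-d/2} ‖f‖ ≤ 2^{d/2} ‖f‖`. -/
theorem stmt_13 {d : ℕ} {H : Type*} [NormedAddCommGroup H] [InnerProductSpace ℝ H]
    [CompleteSpace H] [SecondCountableTopology H]
    (τ : EuclideanSpace ℝ (Fin d) → EuclideanSpace ℝ (Fin d))
    (hτ : ContDiff ℝ 1 τ) (hgrad : ∀ u, ‖fderiv ℝ τ u‖ ≤ 1 / 2)
    (f : EuclideanSpace ℝ (Fin d) → H) (hf : MemLp f 2 volume) :
    MemLp (fun u => f (u - τ u)) 2 volume ∧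
    eLpNorm (fun u => f (u - τ u)) 2 volume ≤
      ENNReal.ofReal ((1 - ⨆ u, ‖fderiv ℝ τ u‖) ^ (-(d : ℝ) / 2)) *
        eLpNorm f 2 volume ∧
    eLpNorm (fun u => f (u - τ u)) 2 volume ≤
      ENNReal.ofReal ((2 : ℝ) ^ ((d : ℝ) / 2)) * eLpNorm f 2 volume := by
  classical
  set S : ℝ := ⨆ u, ‖fderiv ℝ τ u‖ with hSdef
  have hbdd : BddAbove (Set.range fun u => ‖fderiv ℝ τ u‖) :=
    ⟨1 / 2, by rintro _ ⟨u, rfl⟩; exact hgrad u⟩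
  have hS_half : S ≤ 1 / 2 := ciSup_le hgrad
  have hle : ∀ u, ‖fderiv ℝ τ u‖ ≤ S := fun u => le_ciSup hbdd u
  have hS0 : 0 ≤ S := le_trans (norm_nonneg _) (hle 0)
  have hS1 : S < 1 := lt_of_le_of_lt hS_half (by norm_num)
  have hs1 : (0 : ℝ) < 1 - S := by linarith
  set φ : EuclideanSpace ℝ (Fin d) → EuclideanSpace ℝ (Fin d) := fun u => u - τ u with hφ
  have hτdiff : Differentiable ℝ τ := hτ.differentiable one_ne_zero
  set φ' : EuclideanSpace ℝ (Fin d) → (EuclideanSpace ℝ (Fin d) →L[ℝ] EuclideanSpace ℝ (Fin d)) :=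
    fun u => 1 - fderiv ℝ τ u with hφ'
  have hderiv : ∀ u, HasFDerivAt φ (φ' u) u := by
    intro u
    have h1 := (hasFDerivAt_id u).sub (hτdiff u).hasFDerivAt
    exact h1
  have hlip : LipschitzWith (1 / 2 : NNReal) τ := by
    apply lipschitzWith_of_nnnorm_fderiv_le hτdiff
    intro x
    rw [← NNReal.coe_le_coe]
    push_cast
    exact hgrad x
  have hinj : Set.InjOn φ Set.univ := by
    intro u _ v _ huv
    have h1 : u - v = τ u - τ v := by
      have h : u - τ u = v - τ v := huv
      rwa [sub_eq_sub_iff_sub_eq_sub] at h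
    have h2 : ‖τ u - τ v‖ ≤ 1 / 2 * ‖u - v‖ := by
      have := hlip.dist_le_mul u v
      rw [dist_eq_norm, dist_eq_norm] at this
      simpa using this
    have h3 : ‖u - v‖ ≤ 1 / 2 * ‖u - v‖ := le_trans (le_of_eq (by rw [h1])) h2
    have h4 : ‖u - v‖ = 0 := by nlinarith [norm_nonneg (u - v)]
    have := norm_eq_zero.1 h4
    exact sub_eq_zero.1 this
  set K : ℝ≥0∞ := ENNReal.ofReal ((1 - S) ^ d) with hK
  have hdetlb : ∀ u, K ≤ ENNReal.ofReal |(φ' u).det| := fun u =>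
    ENNReal.ofReal_le_ofReal (aux_det_one_sub_ge (fderiv ℝ τ u) (hle u) hS1)
  have hK0 : K ≠ 0 := by
    rw [hK]
    exact (ENNReal.ofReal_pos.2 (pow_pos hs1 d)).ne'
  have hKtop : K ≠ ∞ := ENNReal.ofReal_ne_top
  have hCOV : ∀ g : EuclideanSpace ℝ (Fin d) → ℝ≥0∞,
      ∫⁻ x, K * g (φ x) ≤ ∫⁻ y, g y := by
    intro g
    have h1 := lintegral_image_eq_lintegral_abs_det_fderiv_mul volume MeasurableSet.univ
      (fun x _ => (hderiv x).hasFDerivWithinAt) hinj g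
    calc ∫⁻ x, K * g (φ x) ≤ ∫⁻ x, ENNReal.ofReal |(φ' x).det| * g (φ x) :=
          lintegral_mono fun x => mul_le_mul_left (hdetlb x) _
      _ = ∫⁻ x in Set.univ, ENNReal.ofReal |(φ' x).det| * g (φ x) := (setLIntegral_univ _).symm
      _ = ∫⁻ y in φ '' Set.univ, g y := h1.symm
      _ ≤ ∫⁻ y, g y := setLIntegral_le_lintegral _ _
  have hφcont : Continuous φ := continuous_id.sub hτ.continuous
  have hqmp : Measure.QuasiMeasurePreserving φ volume volume := by
    refine ⟨hφcont.measurable, Measure.AbsolutelyContinuous.mk fun s hs hs0 => ?_⟩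
    rw [Measure.map_apply hφcont.measurable hs]
    have h2 := hCOV (s.indicator (1 : EuclideanSpace ℝ (Fin d) → ℝ≥0∞))
    have h3 : (fun x => K * s.indicator (1 : EuclideanSpace ℝ (Fin d) → ℝ≥0∞) (φ x))
        = fun x => K * (φ ⁻¹' s).indicator (1 : EuclideanSpace ℝ (Fin d) → ℝ≥0∞) x := by
      funext x
      by_cases hx : φ x ∈ s <;> simp [Set.indicator_apply, hx]
    rw [h3, lintegral_const_mul' _ _ hKtop,
      lintegral_indicator_one (hφcont.measurable hs),
      lintegral_indicator_one hs, hs0] at h2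
    have h4 : K * volume (φ ⁻¹' s) = 0 := le_antisymm (le_trans h2 le_rfl) zero_le
    rcases mul_eq_zero.1 h4 with h | h
    · exact absurd h hK0
    · exact h
  have haesm : AEStronglyMeasurable (fun u => f (u - τ u)) volume :=
    hf.aestronglyMeasurable.comp_quasiMeasurePreserving hqmp
  have heL : ∀ h : EuclideanSpace ℝ (Fin d) → H, eLpNorm h 2 volume
      = (∫⁻ x, (‖h x‖₊ : ℝ≥0∞) ^ (2 : ℝ)) ^ (1 / (2 : ℝ)) := by
    intro h
    rw [eLpNorm_eq_lintegral_rpow_enorm_toReal two_ne_zero ENNReal.ofNat_ne_top]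
    norm_num [enorm_eq_nnnorm]
  set g : EuclideanSpace ℝ (Fin d) → ℝ≥0∞ := fun y => (‖f y‖₊ : ℝ≥0∞) ^ (2 : ℝ) with hg
  have key := hCOV g
  rw [lintegral_const_mul' _ _ hKtop] at key
  set I : ℝ≥0∞ := ∫⁻ x, g (φ x) with hI
  set J : ℝ≥0∞ := ∫⁻ y, g y with hJ
  have hIJ : I ≤ K⁻¹ * J := by
    have h := mul_le_mul_right key K⁻¹
    rwa [← mul_assoc, ENNReal.inv_mul_cancel hK0 hKtop, one_mul] at h
  have heL1 : eLpNorm (fun u => f (u - τ u)) 2 volume = I ^ (1 / (2 : ℝ)) := heL _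
  have heL2 : eLpNorm f 2 volume = J ^ (1 / (2 : ℝ)) := heL f
  have hKinv : K⁻¹ ^ (1 / (2 : ℝ)) = ENNReal.ofReal ((1 - S) ^ (-(d : ℝ) / 2)) := by
    have hpow : ((1 - S) : ℝ) ^ d = (1 - S) ^ ((d : ℝ)) := (Real.rpow_natCast _ d).symm
    rw [hK, hpow, ← ENNReal.ofReal_inv_of_pos (Real.rpow_pos_of_pos hs1 _),
      ← Real.rpow_neg hs1.le, ENNReal.ofReal_rpow_of_pos (Real.rpow_pos_of_pos hs1 _),
      ← Real.rpow_mul hs1.le]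
    congr 1
    ring
  have hbound1 : eLpNorm (fun u => f (u - τ u)) 2 volume ≤
      ENNReal.ofReal ((1 - S) ^ (-(d : ℝ) / 2)) * eLpNorm f 2 volume := by
    rw [heL1, heL2, ← hKinv]
    calc I ^ (1 / (2 : ℝ)) ≤ (K⁻¹ * J) ^ (1 / (2 : ℝ)) :=
          ENNReal.rpow_le_rpow hIJ (by norm_num)
      _ = K⁻¹ ^ (1 / (2 : ℝ)) * J ^ (1 / (2 : ℝ)) :=
          ENNReal.mul_rpow_of_nonneg _ _ (by norm_num)
  have hreal : (1 - S) ^ (-(d : ℝ) / 2) ≤ (2 : ℝ) ^ ((d : ℝ) / 2) := by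
    have h1 : (1 - S) ^ (-(d : ℝ) / 2) = ((1 - S)⁻¹) ^ ((d : ℝ) / 2) := by
      rw [Real.inv_rpow hs1.le, ← Real.rpow_neg hs1.le]
      congr 1
      ring
    rw [h1]
    apply Real.rpow_le_rpow (inv_nonneg.2 hs1.le) _ (by positivity)
    have : (1 - S)⁻¹ ≤ ((1 : ℝ) / 2)⁻¹ := inv_anti₀ (by norm_num) (by linarith)
    simpa using this
  have hbound2 : eLpNorm (fun u => f (u - τ u)) 2 volume ≤
      ENNReal.ofReal ((2 : ℝ) ^ ((d : ℝ) / 2)) * eLpNorm f 2 volume :=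
    le_trans hbound1 (mul_le_mul_left (ENNReal.ofReal_le_ofReal hreal) _)
  refine ⟨⟨haesm, ?_⟩, hbound1, hbound2⟩
  exact lt_of_le_of_lt hbound1
    (ENNReal.mul_lt_top ENNReal.ofReal_lt_top hf.2)
end

section
/- Pointwise kernel domination implies domination of pooled norms (key step of the norm preservation lemma). Let H and P be separable real Hilbert spaces, let g : ℝ^d → ℝ≥0 be a nonnegative integrable function, and let A denote convolution with g, i.e., A w(u) = ∫_{ℝ^d} g(u − v) w(v) dv. Let y ∈ L²(ℝ^d, H) and z ∈ L²(ℝ^d, P) be such that ⟨y(v), y(v')⟩_H ≥ ⟨z(v), z(v')⟩_P for almost every pair (v, v') ∈ ℝ^d × ℝ^d, and assume A y ∈ L²(ℝ^d, H) and A z ∈ L²(ℝ^d, P). Then ‖A y‖ ≥ ‖A z‖. -/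
open MeasureTheory
open scoped ENNReal RealInnerProductSpace

local notation "E" d => EuclideanSpace ℝ (Fin d)

/-- A.e. existence of the convolution of an `L¹` kernel with an `L²` function,
together with a quantitative second-moment bound. -/
lemma conv_exists_ae {d : ℕ} {W : Type*} [NormedAddCommGroup W] [NormedSpace ℝ W]
    (g : (E d) → ℝ) (hgm : Measurable g) (hg : ∀ u, 0 ≤ g u) (hgint : Integrable g volume)
    (w : (E d) → W) (hwm : StronglyMeasurable w) (hw : MemLp w 2 volume) :
    ∀ᵐ u : (E d) ∂volume, Integrable (fun v => g (u - v) • w v) volume := by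
  have hgmeas : Measurable fun x => ENNReal.ofReal (g x) := hgm.ennreal_ofReal
  have hwn : Measurable fun v => (‖w v‖₊ : ℝ≥0∞) := hwm.enorm
  have hGlt : (∫⁻ x, ENNReal.ofReal (g x)) < ∞ := by
    have h2 := hgint.2
    rw [hasFiniteIntegral_def] at h2
    refine lt_of_eq_of_lt ?_ h2
    exact lintegral_congr fun x => (Real.enorm_eq_ofReal (hg x)).symm
  have hW2 : (∫⁻ v, (‖w v‖₊ : ℝ≥0∞) ^ (2:ℝ)) < ∞ := by
    have h := lintegral_rpow_enorm_lt_top_of_eLpNorm_lt_top (f := w) two_ne_zero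
      ENNReal.ofNat_ne_top hw.2
    simpa [enorm_eq_nnnorm] using h
  -- measurability of the two-variable integrand
  have hFm : Measurable fun p : (E d) × (E d) =>
      ENNReal.ofReal (g (p.1 - p.2)) * (‖w p.2‖₊ : ℝ≥0∞) ^ (2:ℝ) :=
    ((hgm.comp (measurable_fst.sub measurable_snd)).ennreal_ofReal).mul
      ((hwn.comp measurable_snd).pow_const _)
  -- Step A: a.e. finiteness of the weighted second moment
  have hA : ∀ᵐ u : (E d) ∂volume,
      (∫⁻ v, ENNReal.ofReal (g (u - v)) * (‖w v‖₊ : ℝ≥0∞) ^ (2:ℝ)) < ∞ := by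
    have hint : (∫⁻ u, ∫⁻ v, ENNReal.ofReal (g (u - v)) * (‖w v‖₊ : ℝ≥0∞) ^ (2:ℝ)) < ∞ := by
      have hswap : (∫⁻ u, ∫⁻ v, ENNReal.ofReal (g (u - v)) * (‖w v‖₊ : ℝ≥0∞) ^ (2:ℝ)) =
          ∫⁻ v, ∫⁻ u, ENNReal.ofReal (g (u - v)) * (‖w v‖₊ : ℝ≥0∞) ^ (2:ℝ) :=
        lintegral_lintegral_swap hFm.aemeasurable
      rw [hswap]
      have : ∀ v : (E d), (∫⁻ u, ENNReal.ofReal (g (u - v)) * (‖w v‖₊ : ℝ≥0∞) ^ (2:ℝ)) =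
          (∫⁻ x, ENNReal.ofReal (g x)) * (‖w v‖₊ : ℝ≥0∞) ^ (2:ℝ) := by
        intro v
        rw [lintegral_mul_const' _ _ (ENNReal.rpow_ne_top_of_nonneg (by norm_num) ENNReal.coe_ne_top),
          lintegral_sub_right_eq_self (fun x => ENNReal.ofReal (g x)) v]
      simp_rw [this]
      rw [lintegral_const_mul _ (hwn.pow_const _)]
      exact ENNReal.mul_lt_top hGlt hW2
    exact ae_lt_top (hFm.lintegral_prod_right') hint.ne
  filter_upwards [hA] with u hu
  refine ⟨((hgm.comp (measurable_const.sub measurable_id)).stronglyMeasurable.smul hwm).aestronglyMeasurable, ?_⟩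
  rw [hasFiniteIntegral_def]
  have hgu : Measurable fun v => ENNReal.ofReal (g (u - v)) :=
    hgmeas.comp (measurable_const.sub measurable_id)
  have split : ∀ a b : ℝ≥0∞, a * b = a ^ ((1:ℝ)/2) * (a ^ ((1:ℝ)/2) * b) := by
    intro a b
    rw [← mul_assoc, ← ENNReal.rpow_add_of_nonneg _ _ (by norm_num) (by norm_num)]
    norm_num
  have heq : ∀ v, (‖g (u - v) • w v‖₊ : ℝ≥0∞) =
      (ENNReal.ofReal (g (u - v))) ^ ((1:ℝ)/2) *
        ((ENNReal.ofReal (g (u - v))) ^ ((1:ℝ)/2) * (‖w v‖₊ : ℝ≥0∞)) := by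
    intro v
    rw [nnnorm_smul, ENNReal.coe_mul, ← enorm_eq_nnnorm, Real.enorm_eq_ofReal (hg _), split]
  calc (∫⁻ v, (‖g (u - v) • w v‖₊ : ℝ≥0∞))
      = ∫⁻ v, (ENNReal.ofReal (g (u - v))) ^ ((1:ℝ)/2) *
          ((ENNReal.ofReal (g (u - v))) ^ ((1:ℝ)/2) * (‖w v‖₊ : ℝ≥0∞)) :=
        lintegral_congr heq
    _ ≤ (∫⁻ v, ((ENNReal.ofReal (g (u - v))) ^ ((1:ℝ)/2)) ^ (2:ℝ)) ^ ((1:ℝ)/2) *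
        (∫⁻ v, ((ENNReal.ofReal (g (u - v))) ^ ((1:ℝ)/2) * (‖w v‖₊ : ℝ≥0∞)) ^ (2:ℝ)) ^ ((1:ℝ)/2) := by
        refine ENNReal.lintegral_mul_le_Lp_mul_Lq volume ⟨by norm_num, by norm_num, by norm_num⟩ ?_ ?_
        · exact (hgu.pow_const _).aemeasurable
        · exact ((hgu.pow_const _).mul hwn).aemeasurable
    _ < ∞ := by
        have e1 : ∀ v, ((ENNReal.ofReal (g (u - v))) ^ ((1:ℝ)/2)) ^ (2:ℝ) =
            ENNReal.ofReal (g (u - v)) := by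
          intro v; rw [← ENNReal.rpow_mul]; norm_num
        have e2 : ∀ v, ((ENNReal.ofReal (g (u - v))) ^ ((1:ℝ)/2) * (‖w v‖₊ : ℝ≥0∞)) ^ (2:ℝ) =
            ENNReal.ofReal (g (u - v)) * (‖w v‖₊ : ℝ≥0∞) ^ (2:ℝ) := by
          intro v
          rw [ENNReal.mul_rpow_of_nonneg _ _ (by norm_num), ← ENNReal.rpow_mul]
          norm_num
        simp_rw [e1, e2]
        refine ENNReal.mul_lt_top ?_ ?_
        · refine ENNReal.rpow_lt_top_of_nonneg (by norm_num) ?_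
          rw [(Measure.measurePreserving_sub_left volume u).lintegral_comp hgmeas]
          exact hGlt.ne
        · exact ENNReal.rpow_lt_top_of_nonneg (by norm_num) hu.ne

lemma norm_integral_sq {d : ℕ} {W : Type*} [NormedAddCommGroup W] [InnerProductSpace ℝ W]
    [CompleteSpace W] (f : (E d) → W) (hf : Integrable f volume)
    (hF : Integrable (fun p : (E d) × (E d) => ⟪f p.1, f p.2⟫) (volume.prod volume)) :
    ‖∫ v, f v‖ ^ 2 = ∫ p : (E d) × (E d), ⟪f p.1, f p.2⟫ ∂(volume.prod volume) := by
  rw [MeasureTheory.integral_prod _ hF]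
  have h1 : ∀ v : (E d), (∫ v', ⟪f v, f v'⟫) = ⟪f v, ∫ v', f v'⟫ := fun v =>
    integral_inner hf _
  calc ‖∫ v, f v‖ ^ 2 = ⟪∫ v, f v, ∫ v, f v⟫ := (real_inner_self_eq_norm_sq _).symm
    _ = ∫ v, ⟪∫ v', f v', f v⟫ := (integral_inner hf _).symm
    _ = ∫ v, ⟪f v, ∫ v', f v'⟫ := by simp_rw [real_inner_comm]
    _ = ∫ v, ∫ v', ⟪f v, f v'⟫ := by simp_rw [h1]

lemma aux_main {d : ℕ} {H : Type*} [NormedAddCommGroup H] [InnerProductSpace ℝ H]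
    [CompleteSpace H] [SecondCountableTopology H]
    {P : Type*} [NormedAddCommGroup P] [InnerProductSpace ℝ P]
    [CompleteSpace P] [SecondCountableTopology P]
    (g : (E d) → ℝ) (hgm : Measurable g) (hg : ∀ u, 0 ≤ g u) (hgint : Integrable g volume)
    (y : (E d) → H) (z : (E d) → P) (hym : StronglyMeasurable y) (hzm : StronglyMeasurable z)
    (hy : MemLp y 2 volume) (hz : MemLp z 2 volume)
    (hdom : ∀ᵐ p : (E d) × (E d) ∂(volume.prod volume), ⟪z p.1, z p.2⟫ ≤ ⟪y p.1, y p.2⟫) :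
    eLpNorm (fun u => ∫ v, g (u - v) • z v) 2 volume ≤
      eLpNorm (fun u => ∫ v, g (u - v) • y v) 2 volume := by
  refine eLpNorm_mono_ae ?_
  filter_upwards [conv_exists_ae g hgm hg hgint y hym hy,
    conv_exists_ae g hgm hg hgint z hzm hz] with u hIy hIz
  set fy : (E d) → H := fun v => g (u - v) • y v with hfy
  set fz : (E d) → P := fun v => g (u - v) • z v with hfz
  have sfy : StronglyMeasurable fy :=
    (hgm.comp (measurable_const.sub measurable_id)).stronglyMeasurable.smul hym
  have sfz : StronglyMeasurable fz :=
    (hgm.comp (measurable_const.sub measurable_id)).stronglyMeasurable.smul hzm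
  have hFy : Integrable (fun p : (E d) × (E d) => ⟪fy p.1, fy p.2⟫) (volume.prod volume) := by
    refine (hIy.norm.mul_prod hIy.norm).mono' ?_ ?_
    · exact continuous_inner.comp_aestronglyMeasurable
        (((sfy.comp_measurable measurable_fst).prodMk
          (sfy.comp_measurable measurable_snd)).aestronglyMeasurable)
    · exact Filter.Eventually.of_forall fun p => norm_inner_le_norm _ _
  have hFz : Integrable (fun p : (E d) × (E d) => ⟪fz p.1, fz p.2⟫) (volume.prod volume) := by
    refine (hIz.norm.mul_prod hIz.norm).mono' ?_ ?_
    · exact continuous_inner.comp_aestronglyMeasurable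
        (((sfz.comp_measurable measurable_fst).prodMk
          (sfz.comp_measurable measurable_snd)).aestronglyMeasurable)
    · exact Filter.Eventually.of_forall fun p => norm_inner_le_norm _ _
  have hmono : (∫ p : (E d) × (E d), ⟪fz p.1, fz p.2⟫ ∂(volume.prod volume)) ≤
      ∫ p : (E d) × (E d), ⟪fy p.1, fy p.2⟫ ∂(volume.prod volume) := by
    refine integral_mono_ae hFz hFy ?_
    filter_upwards [hdom] with p hp
    simp only [hfy, hfz, real_inner_smul_left, real_inner_smul_right]
    exact mul_le_mul_of_nonneg_left (mul_le_mul_of_nonneg_left hp (hg _)) (hg _)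
  have hsq : ‖∫ v, fz v‖ ^ 2 ≤ ‖∫ v, fy v‖ ^ 2 := by
    rw [norm_integral_sq fz hIz hFz, norm_integral_sq fy hIy hFy]
    exact hmono
  nlinarith [norm_nonneg (∫ v, fz v), norm_nonneg (∫ v, fy v)]

/-- Pointwise kernel domination implies domination of pooled norms (key step of the norm
preservation lemma): if `⟨y(v), y(v')⟩ ≥ ⟨z(v), z(v')⟩` for a.e. pairs `(v, v')`, and `A`
denotes convolution with a nonnegative integrable filter `g`, then `‖A y‖ ≥ ‖A z‖`. -/
theorem stmt_18 {d : ℕ} {H : Type*} [NormedAddCommGroup H] [InnerProductSpace ℝ H]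
    [CompleteSpace H] [SecondCountableTopology H]
    {P : Type*} [NormedAddCommGroup P] [InnerProductSpace ℝ P]
    [CompleteSpace P] [SecondCountableTopology P]
    (g : EuclideanSpace ℝ (Fin d) → ℝ) (hg : ∀ u, 0 ≤ g u) (hgint : Integrable g volume)
    (y : EuclideanSpace ℝ (Fin d) → H) (z : EuclideanSpace ℝ (Fin d) → P)
    (hy : MemLp y 2 volume) (hz : MemLp z 2 volume)
    (hdom : ∀ᵐ p : EuclideanSpace ℝ (Fin d) × EuclideanSpace ℝ (Fin d)
        ∂(volume.prod volume), ⟪z p.1, z p.2⟫ ≤ ⟪y p.1, y p.2⟫)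
    (hAy : MemLp (fun u => ∫ v, g (u - v) • y v) 2 volume)
    (hAz : MemLp (fun u => ∫ v, g (u - v) • z v) 2 volume) :
    eLpNorm (fun u => ∫ v, g (u - v) • z v) 2 volume ≤
      eLpNorm (fun u => ∫ v, g (u - v) • y v) 2 volume := by
  -- replace `g`, `y`, `z` by measurable representatives
  set g₀ : (E d) → ℝ := fun x => max (hgint.1.mk g x) 0 with hg₀def
  have hgg₀ : g =ᵐ[volume] g₀ := by
    filter_upwards [hgint.1.ae_eq_mk] with x hx
    simp [hg₀def, ← hx, max_eq_left (hg x)]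
  have hg₀m : Measurable g₀ := hgint.1.measurable_mk.max measurable_const
  have hg₀ : ∀ u, 0 ≤ g₀ u := fun u => le_max_right _ _
  have hg₀int : Integrable g₀ volume := hgint.congr hgg₀
  set y₀ := hy.1.mk y with hy₀def
  set z₀ := hz.1.mk z with hz₀def
  have hyy₀ : y =ᵐ[volume] y₀ := hy.1.ae_eq_mk
  have hzz₀ : z =ᵐ[volume] z₀ := hz.1.ae_eq_mk
  have hy₀m : StronglyMeasurable y₀ := hy.1.stronglyMeasurable_mk
  have hz₀m : StronglyMeasurable z₀ := hz.1.stronglyMeasurable_mk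
  have hy₀ : MemLp y₀ 2 volume := hy.ae_eq hyy₀
  have hz₀ : MemLp z₀ 2 volume := hz.ae_eq hzz₀
  -- the convolutions are unchanged, at every point
  have hgae : ∀ u : (E d), (fun v => g (u - v)) =ᵐ[volume] fun v => g₀ (u - v) := fun u =>
    hgg₀.comp_tendsto (Measure.measurePreserving_sub_left volume u).quasiMeasurePreserving.tendsto_ae
  have hconvz : (fun u : (E d) => ∫ v, g (u - v) • z v) =
      fun u => ∫ v, g₀ (u - v) • z₀ v := by
    funext u
    refine integral_congr_ae ?_
    filter_upwards [hgae u, hzz₀] with v h1 h2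
    rw [h1, h2]
  have hconvy : (fun u : (E d) => ∫ v, g (u - v) • y v) =
      fun u => ∫ v, g₀ (u - v) • y₀ v := by
    funext u
    refine integral_congr_ae ?_
    filter_upwards [hgae u, hyy₀] with v h1 h2
    rw [h1, h2]
  -- transfer the domination hypothesis
  have hq1 : Filter.Tendsto (Prod.fst : (E d) × (E d) → (E d))
      (ae (volume.prod volume)) (ae volume) :=
    Measure.quasiMeasurePreserving_fst.tendsto_ae
  have hq2 : Filter.Tendsto (Prod.snd : (E d) × (E d) → (E d))
      (ae (volume.prod volume)) (ae volume) :=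
    Measure.quasiMeasurePreserving_snd.tendsto_ae
  have hdom₀ : ∀ᵐ p : (E d) × (E d) ∂(volume.prod volume),
      ⟪z₀ p.1, z₀ p.2⟫ ≤ ⟪y₀ p.1, y₀ p.2⟫ := by
    filter_upwards [hdom, hzz₀.comp_tendsto hq1, hzz₀.comp_tendsto hq2,
      hyy₀.comp_tendsto hq1, hyy₀.comp_tendsto hq2] with p hp e1 e2 e3 e4
    simp only [Function.comp] at e1 e2 e3 e4
    rw [← e1, ← e2, ← e3, ← e4]
    exact hp
  rw [hconvz, hconvy]
  exact aux_main g₀ hg₀m hg₀ hg₀int y₀ z₀ hy₀m hz₀m hy₀ hz₀ hdom₀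
end
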